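/- Let q = 2^r with q ≥ 8 and let λ be the canonical additive character of F_q. Then Σ_{α ∈ F_q \ {0,1}} λ(a/(α²+α)) = q − 2 holds if and only if a = 0. (Forward direction: if a ≠ 0 then by the identity Σ_{α∈F_q∖{0,1}} λ(a/(α²+α)) = K(λ;a) − 1 and the Weil bound, the sum is at most 2√q − 1 < q − 2.) -/

import Mathlib

open Finset
open scoped Classical

noncomputable instance (p n : ℕ) [Fact p.Prime] : Fintype (GaloisField p n) :=
  Fintype.ofFinite _

/-- The canonical additive character of `𝔽_{2^r}`, valued in `{±1} ⊆ ℤ`: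
`λ(x) = (-1)^{tr(x)}` where `tr` is the absolute trace to `𝔽₂`. -/
noncomputable def lam (r : ℕ) (x : GaloisField 2 r) : ℤ :=
  if Algebra.trace (ZMod 2) (GaloisField 2 r) x = 0 then 1 else -1

/-- The Kloosterman sum `K(λ;β) = Σ_{x ∈ 𝔽_q*} λ(x + β x⁻¹)`. -/
noncomputable def Kl (r : ℕ) (β : GaloisField 2 r) : ℤ :=
  ∑ x ∈ (Finset.univ \ {0} : Finset (GaloisField 2 r)), lam r (x + β * x⁻¹)

namespace Stmt18Aux

lemma key_id {F : Type*} [Field F] (h2 : (2 : F) = 0) (a t x : F) (ht0 : t ≠ 0)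
    (ht1 : t + 1 ≠ 0) (hx : x ≠ 0) (hden : t ^ 2 + t ≠ 0) :
    a * (t ^ 2 + t + 1) / (t ^ 2 + t) / x = a / x + a / (t * x) + a / ((t + 1) * x) := by
  field_simp
  linear_combination (-(a * t)) * h2

variable (r : ℕ)

local notation "F" => GaloisField 2 r
local notation "T" => Algebra.trace (ZMod 2) (GaloisField 2 r)

lemma two0 : (2 : F) = 0 := CharTwo.two_eq_zero

lemma tr_sq (x : F) : T (x ^ 2) = T x := by
  apply (algebraMap (ZMod 2) (GaloisField 2 r)).injective
  rw [trace_eq_sum_automorphisms, trace_eq_sum_automorphisms]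
  have : ∑ σ : GaloisField 2 r ≃ₐ[ZMod 2] GaloisField 2 r, σ (x ^ 2)
      = (∑ σ : GaloisField 2 r ≃ₐ[ZMod 2] GaloisField 2 r, σ x) ^ 2 := by
    rw [sum_pow_char]
    simp [map_pow]
  rw [this, ← trace_eq_sum_automorphisms, ← map_pow]
  congr 1
  have h : ∀ t : ZMod 2, t ^ 2 = t := by decide
  exact h _

lemma tr_nondeg {c : F} (hc : c ≠ 0) : ∃ b : F, T (c * b) ≠ 0 := by
  have h := (_root_.traceForm_nondegenerate (ZMod 2) (GaloisField 2 r)).1 c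
  simp_rw [Algebra.traceForm_apply] at h
  by_contra! hf
  exact hc (h hf)

lemma fiber_iff (x y : F) : x ^ 2 + x = y ^ 2 + y ↔ (x = y ∨ x = y + 1) := by
  have h2 := two0 r
  constructor
  · intro h
    have hfac : (x + y) * (x + y + 1) = 0 := by
      linear_combination h + (x * y + y ^ 2 + y) * h2
    rcases mul_eq_zero.mp hfac with h0 | h1
    · left; linear_combination h0 - y * h2
    · right; linear_combination h1 - (y + 1) * h2
  · rintro (rfl | rfl)
    · rfl
    · linear_combination (y + 1) * h2

lemma AS (β : F) (hβ : T β = 0) : ∃ α : F, α ^ 2 + α = β := by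
  classical
  have hsub : Finset.image (fun α : F => α ^ 2 + α) Finset.univ ⊆
      Finset.univ.filter (fun x : F => T x = 0) := by
    intro γ hγ
    simp only [Finset.mem_image, Finset.mem_univ, true_and] at hγ
    obtain ⟨α, hα⟩ := hγ
    simp only [Finset.mem_filter, Finset.mem_univ, true_and]
    rw [← hα, map_add, tr_sq]
    exact CharTwo.add_self_eq_zero _
  obtain ⟨z, hz⟩ := tr_nondeg r (c := (1 : F)) one_ne_zero
  rw [one_mul] at hz
  have hbij : (Finset.univ.filter (fun x : F => T x = 0)).card
      = (Finset.univ.filter (fun x : F => ¬ T x = 0)).card := by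
    apply Finset.card_bij (fun x _ => x + z)
    · intro x hx
      simp only [Finset.mem_filter, Finset.mem_univ, true_and] at hx ⊢
      rw [map_add, hx, zero_add]; exact hz
    · intro x _ y _ h
      exact add_right_cancel h
    · intro y hy
      simp only [Finset.mem_filter, Finset.mem_univ, true_and] at hy ⊢
      refine ⟨y + z, ?_, ?_⟩
      · rw [map_add]
        have : ∀ u v : ZMod 2, u ≠ 0 → v ≠ 0 → u + v = 0 := by decide
        exact this _ _ hy hz
      · rw [add_assoc, CharTwo.add_self_eq_zero, add_zero]
  have hsplit := Finset.card_filter_add_card_filter_not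
    (s := (Finset.univ : Finset F)) (p := fun x : F => T x = 0)
  rw [Finset.card_univ] at hsplit
  have hker2 : 2 * (Finset.univ.filter (fun x : F => T x = 0)).card
      = Fintype.card F := by omega
  have hcount := Finset.card_eq_sum_card_fiberwise
    (s := (Finset.univ : Finset F))
    (t := Finset.image (fun α : F => α ^ 2 + α) Finset.univ)
    (f := fun α : F => α ^ 2 + α)
    (fun x _ => Finset.mem_image_of_mem _ (Finset.mem_univ x))
  have hfib : ∀ γ ∈ Finset.image (fun α : F => α ^ 2 + α) Finset.univ,
      (Finset.univ.filter (fun x : F => x ^ 2 + x = γ)).card = 2 := by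
    intro γ hγ
    simp only [Finset.mem_image, Finset.mem_univ, true_and] at hγ
    obtain ⟨α, hα⟩ := hγ
    have heq : Finset.univ.filter (fun x : F => x ^ 2 + x = γ) = {α, α + 1} := by
      ext x
      simp only [Finset.mem_filter, Finset.mem_univ, true_and, Finset.mem_insert,
        Finset.mem_singleton]
      rw [← hα]
      exact fiber_iff r x α
    rw [heq, Finset.card_insert_of_notMem, Finset.card_singleton]
    simp only [Finset.mem_singleton]
    intro h
    have h1 : (1 : F) = 0 := by linear_combination -h
    exact one_ne_zero h1
  rw [Finset.sum_congr rfl hfib, Finset.sum_const, Finset.card_univ,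
    smul_eq_mul] at hcount
  have him2 : 2 * (Finset.image (fun α : F => α ^ 2 + α) Finset.univ).card
      = Fintype.card F := by omega
  have heq : Finset.image (fun α : F => α ^ 2 + α) Finset.univ
      = Finset.univ.filter (fun x : F => T x = 0) :=
    Finset.eq_of_subset_of_card_le hsub (by omega)
  have hmem : β ∈ Finset.univ.filter (fun x : F => T x = 0) := by
    simp only [Finset.mem_filter, Finset.mem_univ, true_and]; exact hβ
  rw [← heq] at hmem
  simp only [Finset.mem_image, Finset.mem_univ, true_and] at hmem
  exact hmem

end Stmt18Aux

theorem stmt18 (r : ℕ) (hr : 3 ≤ r) (a : GaloisField 2 r) :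
    (∑ α ∈ (Finset.univ \ {0, 1} : Finset (GaloisField 2 r)),
        lam r (a / (α ^ 2 + α)) = 2 ^ r - 2) ↔ a = 0 := by
  classical
  have hq8 : (8 : ℕ) ≤ 2 ^ r := by
    calc (8 : ℕ) = 2 ^ 3 := by norm_num
    _ ≤ 2 ^ r := Nat.pow_le_pow_right (by norm_num) hr
  have hcardF : Fintype.card (GaloisField 2 r) = 2 ^ r := by
    have := GaloisField.card 2 r (by omega)
    simpa [Nat.card_eq_fintype_card] using this
  have h01 : (0 : GaloisField 2 r) ≠ 1 := zero_ne_one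
  have hcards : (Finset.univ \ {0, 1} : Finset (GaloisField 2 r)).card = 2 ^ r - 2 := by
    rw [Finset.card_sdiff_of_subset (Finset.subset_univ _), Finset.card_univ, hcardF]
    congr 1
    rw [Finset.card_insert_of_notMem (by simp [h01]), Finset.card_singleton]
  have hsum1 : ∑ _α ∈ (Finset.univ \ {0, 1} : Finset (GaloisField 2 r)), (1 : ℤ)
      = 2 ^ r - 2 := by
    rw [Finset.sum_const, hcards, nsmul_eq_mul, mul_one,
      Nat.cast_sub (by omega : 2 ≤ 2 ^ r)]
    push_cast
    ring
  have two0 : (2 : GaloisField 2 r) = 0 := Stmt18Aux.two0 r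
  constructor
  · intro hsum
    by_contra ha
    -- Step A : every term is 1
    have hone : ∀ α ∈ (Finset.univ \ {0, 1} : Finset (GaloisField 2 r)),
        lam r (a / (α ^ 2 + α)) = 1 := by
      have hle : ∀ α ∈ (Finset.univ \ {0, 1} : Finset (GaloisField 2 r)),
          lam r (a / (α ^ 2 + α)) ≤ 1 := by
        intro α _
        unfold lam
        split <;> norm_num
      exact (Finset.sum_eq_sum_iff_of_le hle).mp (hsum.trans hsum1.symm)
    -- Step A' : T (a / β) = 0 for β ≠ 0 with T β = 0
    have hT0 : ∀ β : GaloisField 2 r, β ≠ 0 →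
        Algebra.trace (ZMod 2) (GaloisField 2 r) β = 0 →
        Algebra.trace (ZMod 2) (GaloisField 2 r) (a / β) = 0 := by
      intro β hβ0 hβT
      obtain ⟨α, hα⟩ := Stmt18Aux.AS r β hβT
      have hα0 : α ≠ 0 := by
        rintro rfl
        apply hβ0
        rw [← hα]; ring
      have hα1 : α ≠ 1 := by
        rintro rfl
        apply hβ0
        rw [← hα]
        linear_combination two0
      have hmem : α ∈ (Finset.univ \ {0, 1} : Finset (GaloisField 2 r)) := by
        simp [Finset.mem_sdiff, hα0, hα1]
      have h1 := hone α hmem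
      rw [hα] at h1
      by_contra hne
      unfold lam at h1
      rw [if_neg hne] at h1
      norm_num at h1
    -- involution
    have hinv : ∀ x : GaloisField 2 r, x ≠ 0 → a / (a / x) = x := by
      intro x hx
      field_simp
    have hiff : ∀ x : GaloisField 2 r, x ≠ 0 →
        (Algebra.trace (ZMod 2) (GaloisField 2 r) x = 0 ↔
          Algebra.trace (ZMod 2) (GaloisField 2 r) (a / x) = 0) := by
      intro x hx
      constructor
      · exact hT0 x hx
      · intro h
        have hax : a / x ≠ 0 := div_ne_zero ha hx
        have := hT0 (a / x) hax h
        rwa [hinv x hx] at this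
    have hsym : ∀ x : GaloisField 2 r, x ≠ 0 →
        Algebra.trace (ZMod 2) (GaloisField 2 r) (a / x)
          = Algebra.trace (ZMod 2) (GaloisField 2 r) x := by
      intro x hx
      have h2 : ∀ u : ZMod 2, u = 0 ∨ u = 1 := by decide
      rcases h2 (Algebra.trace (ZMod 2) (GaloisField 2 r) x) with h | h
      · rw [h, (hiff x hx).mp h]
      · rcases h2 (Algebra.trace (ZMod 2) (GaloisField 2 r) (a / x)) with h' | h'
        · exfalso
          have := (hiff x hx).mpr h'
          rw [h] at this
          exact one_ne_zero this
        · rw [h, h']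
    -- choose t
    have hroots : ∃ t : GaloisField 2 r, t ≠ 0 ∧ t ≠ 1 ∧ t ^ 2 + t + 1 ≠ 0 := by
      by_contra h
      push_neg at h
      have hne : (Finset.univ \ {0, 1} : Finset (GaloisField 2 r)).Nonempty := by
        rw [← Finset.card_pos, hcards]; omega
      obtain ⟨s, hs⟩ := hne
      rw [Finset.mem_sdiff] at hs
      have hs0 : s ≠ 0 := fun h' => hs.2 (by simp [h'])
      have hs1 : s ≠ 1 := fun h' => hs.2 (by simp [h'])
      have hsroot := h s hs0 hs1
      have hsubset : (Finset.univ : Finset (GaloisField 2 r)) ⊆ {0, 1, s, s + 1} := by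
        intro t _
        by_cases ht0 : t = 0
        · simp [ht0]
        by_cases ht1 : t = 1
        · simp [ht1]
        have htroot := h t ht0 ht1
        have heq : t ^ 2 + t = s ^ 2 + s := by
          linear_combination htroot - hsroot
        rcases (Stmt18Aux.fiber_iff r t s).mp heq with rfl | rfl <;> simp
      have hle4 : ({0, 1, s, s + 1} : Finset (GaloisField 2 r)).card ≤ 4 := by
        have c1 := Finset.card_insert_le (0 : GaloisField 2 r) ({1, s, s + 1} : Finset (GaloisField 2 r))
        have c2 := Finset.card_insert_le (1 : GaloisField 2 r) ({s, s + 1} : Finset (GaloisField 2 r))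
        have c3 := Finset.card_insert_le s ({s + 1} : Finset (GaloisField 2 r))
        have c4 : ({s + 1} : Finset (GaloisField 2 r)).card = 1 := Finset.card_singleton _
        omega
      have hcc := Finset.card_le_card hsubset
      rw [Finset.card_univ, hcardF] at hcc
      omega
    obtain ⟨t, ht0, ht1, htr⟩ := hroots
    have ht1' : t + 1 ≠ 0 := by
      intro h
      apply ht1
      linear_combination h - two0
    have hden : t ^ 2 + t ≠ 0 := by
      intro h
      have hft : t * (t + 1) = 0 := by linear_combination h
      rcases mul_eq_zero.mp hft with h' | h'
      · exact ht0 h'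
      · exact ht1' h'
    have hcne : a * (t ^ 2 + t + 1) / (t ^ 2 + t) ≠ 0 :=
      div_ne_zero (mul_ne_zero ha htr) hden
    set c : GaloisField 2 r := a * (t ^ 2 + t + 1) / (t ^ 2 + t) with hc
    have hTzero : ∀ z : GaloisField 2 r, z ≠ 0 →
        Algebra.trace (ZMod 2) (GaloisField 2 r) z = 0 := by
      intro z hz
      have hxne : c / z ≠ 0 := div_ne_zero hcne hz
      have hcx : c / (c / z) = z := by
        field_simp
      have hkey : c / (c / z) = a / (c / z) + a / (t * (c / z)) + a / ((t + 1) * (c / z)) := by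
        rw [hc]
        exact Stmt18Aux.key_id two0 a t (c / z) ht0 ht1' hxne hden
      have hzero : (c / z) + t * (c / z) + (t + 1) * (c / z) = 0 := by
        linear_combination ((c / z) + t * (c / z)) * two0
      have hTsum := congrArg (Algebra.trace (ZMod 2) (GaloisField 2 r)) hkey
      rw [map_add, map_add, hsym _ hxne, hsym _ (mul_ne_zero ht0 hxne),
        hsym _ (mul_ne_zero ht1' hxne), ← map_add, ← map_add, hzero, map_zero,
        hcx] at hTsum
      exact hTsum
    obtain ⟨b, hb⟩ := Stmt18Aux.tr_nondeg r (c := (1 : GaloisField 2 r)) one_ne_zero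
    rw [one_mul] at hb
    have hbne : b ≠ 0 := by
      intro h
      rw [h, map_zero] at hb
      exact hb rfl
    exact hb (hTzero b hbne)
  · rintro rfl
    have hconst : ∀ α ∈ (Finset.univ \ {0, 1} : Finset (GaloisField 2 r)),
        lam r (0 / (α ^ 2 + α)) = 1 := by
      intro α _
      rw [zero_div]
      unfold lam
      rw [if_pos (map_zero _)]
    rw [Finset.sum_congr rfl hconst]
    exact hsum1
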